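/- For every class Γ_t and every vertex v_i ∈ Γ_t, the value ℓ(v_i) defined by the placing formula satisfies ℓ'(γ_t) − 1 ≤ ℓ(v_i) ≤ ℓ'(γ_t). -/

import Mathlib

/-- A unit interval representation of `G`: distinct vertices are adjacent iff their
points are at distance at most `1`. -/
def IsUIRep {V : Type*} (G : SimpleGraph V) (ℓ : V → ℝ) : Prop :=
  ∀ u v : V, u ≠ v → (G.Adj u v ↔ |ℓ u - ℓ v| ≤ 1)

/-- Two vertices are indistinguishable if they have the same closed neighborhood. -/
def Indist {V : Type*} (G : SimpleGraph V) (u v : V) : Prop :=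
  ∀ w : V, (w = u ∨ G.Adj u w) ↔ (w = v ∨ G.Adj v w)

/-- `GridRep G lt K lbound ℓ`: `ℓ` belongs to `Rep(G, <, ε, lbound)` for `ε = 1/K`,
i.e. it is an `ε`-grid unit interval representation of `G` whose left-to-right order
extends `lt` and which satisfies the lower bounds. -/
def GridRep {V : Type*} (G : SimpleGraph V) (lt : V → V → Prop) (K : ℕ) (lbound : V → ℝ)
    (ℓ : V → ℝ) : Prop :=
  IsUIRep G ℓ ∧ (∀ v : V, ∃ m : ℤ, ℓ v = m * (1 / (K : ℝ))) ∧
    (∀ u v : V, lt u v → ℓ u ≤ ℓ v) ∧ (∀ v : V, lbound v ≤ ℓ v)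

/-- The pruned graph on the indistinguishability classes `Γ 0 < Γ 1 < ⋯ < Γ (k-1)`:
two distinct classes are adjacent iff their vertices are adjacent in `G`. -/
def pruned {V : Type*} (G : SimpleGraph V) {k : ℕ} (Γ : Fin k → Set V) :
    SimpleGraph (Fin k) where
  Adj i j := i ≠ j ∧ ∃ u ∈ Γ i, ∃ w ∈ Γ j, G.Adj u w
  symm := ⟨by
    rintro i j ⟨hij, u, hu, w, hw, h⟩
    exact ⟨hij.symm, w, hw, u, hu, h.symm⟩⟩
  loopless := ⟨by rintro i ⟨hii, -⟩; exact hii rfl⟩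

/-- `PlacingValue G' K ℓ' lb t x`: `x` is the value assigned by the placing formula
`x = max {lb, ℓ'(γ^t_←) + 1 + ε, ℓ'(γ^t_→) - 1}` to a vertex of the class `Γ t` with
lower bound `lb`, where `γ^t_←` is the largest class preceding `t` and non-adjacent to
`t` (the corresponding term being omitted if no such class exists) and `γ^t_→` is the
largest class adjacent to `t` (possibly `t` itself). -/
def PlacingValue {k : ℕ} (G' : SimpleGraph (Fin k)) (K : ℕ) (ℓ' : Fin k → ℝ)
    (lb : ℝ) (t : Fin k) (x : ℝ) : Prop :=
  ∃ rA : Fin k, ((rA = t ∨ G'.Adj t rA) ∧ ∀ s : Fin k, (s = t ∨ G'.Adj t s) → s ≤ rA) ∧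
    ((∃ lA : Fin k, (lA < t ∧ ¬ G'.Adj lA t ∧ ∀ s : Fin k, s < t → ¬ G'.Adj s t → s ≤ lA) ∧
        x = max (max lb (ℓ' lA + 1 + 1 / (K : ℝ))) (ℓ' rA - 1)) ∨
      ((∀ s : Fin k, s < t → G'.Adj s t) ∧ x = max lb (ℓ' rA - 1)))

/-- the placing formula puts every vertex of the class `Γ t` between
`ℓ'(γ_t) - 1` and `ℓ'(γ_t)`. -/
theorem stmt10 {V : Type*} [Fintype V] (G : SimpleGraph V)
    (hconn : G.Connected) (hUI : ∃ ℓ₀ : V → ℝ, IsUIRep G ℓ₀)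
    (lt : V → V → Prop)
    (hirr : ∀ v : V, ¬ lt v v)
    (htrans : ∀ a b c : V, lt a b → lt b c → lt a c)
    (hinc : ∀ u v : V, u ≠ v → (Indist G u v ↔ ¬ lt u v ∧ ¬ lt v u))
    (K : ℕ) (hK : 0 < K) (lbound : V → ℝ)
    (k : ℕ) (Γ : Fin k → Set V)
    (hne : ∀ i : Fin k, (Γ i).Nonempty)
    (hcover : ∀ v : V, ∃ i : Fin k, v ∈ Γ i)
    (hclass : ∀ i : Fin k, ∀ u ∈ Γ i, ∀ v : V, v ∈ Γ i ↔ Indist G u v)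
    (horder : ∀ i j : Fin k, i < j → ∀ u ∈ Γ i, ∀ v ∈ Γ j, lt u v)
    (lbound' : Fin k → ℝ)
    (hlb' : ∀ i : Fin k, IsGreatest (lbound '' Γ i) (lbound' i))
    (ℓ' : Fin k → ℝ) (hℓ' : GridRep (pruned G Γ) (· < ·) K lbound' ℓ')
    (t : Fin k) (v : V) (hv : v ∈ Γ t) (x : ℝ)
    (hx : PlacingValue (pruned G Γ) K ℓ' (lbound v) t x) :
    ℓ' t - 1 ≤ x ∧ x ≤ ℓ' t := by
  obtain ⟨hUIr, hgrid, hmono, hlb⟩ := hℓ'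
  obtain ⟨rA, ⟨hrA1, hrA2⟩, hcase⟩ := hx
  have htle : t ≤ rA := hrA2 t (Or.inl rfl)
  have hℓtr : ℓ' t ≤ ℓ' rA := by
    rcases lt_or_eq_of_le htle with h | h
    · exact hmono t rA h
    · rw [h]
  have hr1 : ℓ' rA - 1 ≤ ℓ' t := by
    rcases hrA1 with h | h
    · rw [h]; linarith
    · have hne' : t ≠ rA := h.ne
      have h2 := abs_le.mp ((hUIr t rA hne').mp h)
      linarith [h2.1, h2.2]
  have hlbv : lbound v ≤ ℓ' t := ((hlb' t).2 ⟨v, hv, rfl⟩).trans (hlb t)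
  rcases hcase with ⟨lA, ⟨hlt, hnadj, -⟩, hxeq⟩ | ⟨-, hxeq⟩
  · subst hxeq
    refine ⟨by have := le_max_right (max (lbound v) (ℓ' lA + 1 + 1/(K:ℝ))) (ℓ' rA - 1); linarith, ?_⟩
    have hne' : lA ≠ t := ne_of_lt hlt
    have hfar : ¬ |ℓ' lA - ℓ' t| ≤ 1 := fun h => hnadj ((hUIr lA t hne').mpr h)
    have hmono' : ℓ' lA ≤ ℓ' t := hmono lA t hlt
    have hgt : 1 < ℓ' t - ℓ' lA := by
      by_contra h
      push_neg at h
      exact hfar (abs_le.mpr ⟨by linarith, by linarith⟩)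
    obtain ⟨m, hm⟩ := hgrid t
    obtain ⟨n, hn⟩ := hgrid lA
    have hKpos : (0:ℝ) < K := Nat.cast_pos.mpr hK
    have hdiff : ℓ' lA + 1 + 1/(K:ℝ) ≤ ℓ' t := by
      have hKinv : (K:ℝ) * (1/K) = 1 := by field_simp
      have h1 : (K:ℝ) < ((m - n : ℤ) : ℝ) := by
        rw [hm, hn] at hgt
        push_cast
        nlinarith [mul_lt_mul_of_pos_left hgt hKpos, hKinv]
      have h2 : (K:ℤ) < m - n := by exact_mod_cast h1
      have h3 : (K:ℤ) + 1 ≤ m - n := h2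
      have h4 : ((K:ℝ) + 1) ≤ ((m - n : ℤ) : ℝ) := by exact_mod_cast h3
      rw [hm, hn]
      push_cast at h4 ⊢
      nlinarith [mul_le_mul_of_nonneg_right h4 (le_of_lt (one_div_pos.mpr hKpos)), hKinv]
    exact max_le (max_le hlbv hdiff) (by linarith)
  · subst hxeq
    exact ⟨by have := le_max_right (lbound v) (ℓ' rA - 1); linarith,
      max_le hlbv (by linarith)⟩
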